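/- Let φ_on(d, t) be as in the Gaussian-source on-beam diffusion distribution. Its second derivative in d equals (Q0/(2πD d²))·((1 + 2d²/A)e^{−d²/A} − (1 + 2d²/B)e^{−d²/B}) with A = 2Ds + 4D(t − ti), B = 2Ds. It is strictly negative (φ_on concave in d) if d²/(2Ds) < 1/2, and strictly positive (φ_on convex in d) if d²/(2Ds + 4D(t − ti)) > 1/2. -/

import Mathlib

open Real MeasureTheory Set

/-- The exponential integral of order one. -/
noncomputable def E1 (v : ℝ) : ℝ := ∫ u in Set.Ioi v, u⁻¹ * Real.exp (-u)

/-- On-beam diffusion distribution as a function of the distance `d`. -/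
noncomputable def phiOn (Q0 D Ds ti t d : ℝ) : ℝ :=
  (Q0 / (4 * Real.pi * D)) *
    (E1 (d ^ 2 / (2 * Ds + 4 * D * (t - ti))) - E1 (d ^ 2 / (2 * Ds)))


lemma f_int {v : ℝ} (hv : 0 < v) :
    IntegrableOn (fun u : ℝ => u⁻¹ * Real.exp (-u)) (Ioi v) := by
  have hg : IntegrableOn (fun u : ℝ => v⁻¹ * Real.exp (-u)) (Ioi v) := by
    have := (exp_neg_integrableOn_Ioi v (by norm_num : (0:ℝ) < 1)).const_mul v⁻¹
    simp at this
    exact this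
  refine hg.integrable.mono' ?_ ?_
  · exact (Measurable.inv measurable_id).aestronglyMeasurable.mul
      (Real.measurable_exp.comp measurable_neg).aestronglyMeasurable
  · filter_upwards [MeasureTheory.ae_restrict_mem measurableSet_Ioi] with u hu
    have h0 : 0 < u := hv.trans hu
    rw [norm_mul, Real.norm_eq_abs, Real.norm_eq_abs, abs_of_pos (inv_pos.2 h0),
      abs_of_pos (Real.exp_pos _)]
    exact mul_le_mul_of_nonneg_right (inv_anti₀ hv hu.le) (Real.exp_pos _).le

lemma E1_eq {x : ℝ} (hx : 0 < x) :
    E1 x = E1 1 - ∫ t in (1:ℝ)..x, t⁻¹ * Real.exp (-t) := by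
  rcases le_or_gt x 1 with h | h
  · rw [intervalIntegral.integral_symm, intervalIntegral.integral_of_le h]
    have hsplit : E1 x = (∫ t in Ioc x 1, t⁻¹ * Real.exp (-t)) + E1 1 := by
      rw [E1, E1, ← MeasureTheory.setIntegral_union (Ioc_disjoint_Ioi le_rfl)
        measurableSet_Ioi ((f_int hx).mono_set Ioc_subset_Ioi_self)
        ((f_int hx).mono_set (Ioi_subset_Ioi h)), Ioc_union_Ioi_eq_Ioi h]
    rw [hsplit]; ring
  · rw [intervalIntegral.integral_of_le h.le]
    have hsplit : E1 1 = (∫ t in Ioc 1 x, t⁻¹ * Real.exp (-t)) + E1 x := by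
      rw [E1, E1, ← MeasureTheory.setIntegral_union (Ioc_disjoint_Ioi le_rfl)
        measurableSet_Ioi ((f_int one_pos).mono_set Ioc_subset_Ioi_self)
        ((f_int one_pos).mono_set (Ioi_subset_Ioi h.le)), Ioc_union_Ioi_eq_Ioi h.le]
    rw [hsplit]; ring

lemma E1_hasDerivAt {v : ℝ} (hv : 0 < v) :
    HasDerivAt E1 (-(v⁻¹ * Real.exp (-v))) v := by
  have hcont : ContinuousOn (fun u : ℝ => u⁻¹ * Real.exp (-u)) {0}ᶜ := by
    exact ContinuousOn.mul (continuousOn_inv₀) (Real.continuous_exp.comp continuous_neg).continuousOn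
  have hii : IntervalIntegrable (fun u : ℝ => u⁻¹ * Real.exp (-u)) volume 1 v := by
    apply ContinuousOn.intervalIntegrable
    apply hcont.mono
    intro u hu
    simp only [Set.mem_compl_iff, Set.mem_singleton_iff]
    rcases le_total 1 v with hc | hc
    · rw [Set.uIcc_of_le hc] at hu; nlinarith [hu.1]
    · rw [Set.uIcc_of_ge hc] at hu; nlinarith [hu.1]
  have hmeas : StronglyMeasurableAtFilter (fun u : ℝ => u⁻¹ * Real.exp (-u)) (nhds v) :=
    ⟨Set.univ, Filter.univ_mem, ((Measurable.inv measurable_id).mul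
      (Real.measurable_exp.comp measurable_neg)).aestronglyMeasurable.restrict⟩
  have hc : ContinuousAt (fun u : ℝ => u⁻¹ * Real.exp (-u)) v :=
    hcont.continuousAt (compl_singleton_mem_nhds hv.ne')
  have h1 := intervalIntegral.integral_hasDerivAt_right hii hmeas hc
  have h2 : HasDerivAt (fun x => E1 1 - ∫ t in (1:ℝ)..x, t⁻¹ * Real.exp (-t))
      (-(v⁻¹ * Real.exp (-v))) v := by
    exact ((hasDerivAt_const v (E1 1)).sub h1).congr_deriv (zero_sub _)
  refine h2.congr_of_eventuallyEq ?_
  filter_upwards [isOpen_Ioi.mem_nhds hv] with x hx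
  exact E1_eq hx

noncomputable def Fa (y : ℝ) : ℝ := (1 + 2 * y) * Real.exp (-y)

lemma Fa_hasDerivAt (y : ℝ) : HasDerivAt Fa ((1 - 2 * y) * Real.exp (-y)) y := by
  have h1 : HasDerivAt (fun y : ℝ => 1 + 2 * y) 2 y := by
    simpa using ((hasDerivAt_id y).const_mul 2).const_add 1
  have h2 : HasDerivAt (fun y : ℝ => Real.exp (-y)) (Real.exp (-y) * (-1)) y :=
    (hasDerivAt_neg y).exp
  have := h1.mul h2
  refine this.congr_deriv ?_
  ring

lemma Fa_strictMonoOn : StrictMonoOn Fa (Iic (1/2 : ℝ)) := by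
  apply strictMonoOn_of_deriv_pos (convex_Iic _)
  · exact (Continuous.mul (by continuity) (Real.continuous_exp.comp continuous_neg)).continuousOn
  · intro x hx
    rw [interior_Iic] at hx
    rw [(Fa_hasDerivAt x).deriv]
    have : 0 < 1 - 2 * x := by simp only [mem_Iio] at hx; linarith
    positivity

lemma Fa_strictAntiOn : StrictAntiOn Fa (Ici (1/2 : ℝ)) := by
  apply strictAntiOn_of_deriv_neg (convex_Ici _)
  · exact (Continuous.mul (by continuity) (Real.continuous_exp.comp continuous_neg)).continuousOn
  · intro x hx
    rw [interior_Ici] at hx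
    rw [(Fa_hasDerivAt x).deriv]
    simp only [mem_Ioi] at hx
    have h1 : 1 - 2 * x < 0 := by linarith
    exact mul_neg_of_neg_of_pos h1 (Real.exp_pos _)

lemma phi_hasDerivAt (c A B : ℝ) (hA : 0 < A) (hB : 0 < B) {x : ℝ} (hx : x ≠ 0) :
    HasDerivAt (fun x => c * (E1 (x ^ 2 / A) - E1 (x ^ 2 / B)))
      (c * (2 / x) * (Real.exp (-x ^ 2 / B) - Real.exp (-x ^ 2 / A))) x := by
  have hx2 : 0 < x ^ 2 := by positivity
  have hqA : HasDerivAt (fun x : ℝ => x ^ 2 / A) (2 * x / A) x := by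
    simpa using (hasDerivAt_pow 2 x).div_const A
  have hqB : HasDerivAt (fun x : ℝ => x ^ 2 / B) (2 * x / B) x := by
    simpa using (hasDerivAt_pow 2 x).div_const B
  have hEA := (E1_hasDerivAt (div_pos hx2 hA)).comp x hqA
  have hEB := (E1_hasDerivAt (div_pos hx2 hB)).comp x hqB
  have := (hEA.sub hEB).const_mul c
  refine this.congr_deriv ?_
  symm
  have e1 : (-x ^ 2 / A : ℝ) = -(x ^ 2 / A) := by ring
  have e2 : (-x ^ 2 / B : ℝ) = -(x ^ 2 / B) := by ring
  rw [e1, e2]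
  field_simp
  ring

theorem phiOn_second_deriv (Q0 D Ds ti t : ℝ)
    (hQ : 0 < Q0) (hD : 0 < D) (hDs : 0 < Ds) (ht : ti < t) (d : ℝ) (hd : d ≠ 0) :
    deriv (deriv (phiOn Q0 D Ds ti t)) d
      = (Q0 / (2 * Real.pi * D * d ^ 2)) *
          ((1 + 2 * d ^ 2 / (2 * Ds + 4 * D * (t - ti))) *
              Real.exp (-d ^ 2 / (2 * Ds + 4 * D * (t - ti)))
            - (1 + 2 * d ^ 2 / (2 * Ds)) * Real.exp (-d ^ 2 / (2 * Ds))) ∧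
    (d ^ 2 / (2 * Ds) < 1 / 2 → deriv (deriv (phiOn Q0 D Ds ti t)) d < 0) ∧
    (1 / 2 < d ^ 2 / (2 * Ds + 4 * D * (t - ti)) →
      0 < deriv (deriv (phiOn Q0 D Ds ti t)) d) := by
  have hpi := Real.pi_pos
  set A := 2 * Ds + 4 * D * (t - ti) with hAdef
  set B := 2 * Ds with hBdef
  have hA : 0 < A := by rw [hAdef]; nlinarith
  have hB : 0 < B := by rw [hBdef]; linarith
  have hBA : B < A := by rw [hAdef, hBdef]; nlinarith
  set c := Q0 / (4 * Real.pi * D) with hcdef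
  set g : ℝ → ℝ := fun x =>
    c * (2 * x⁻¹) * (Real.exp (-x ^ 2 / B) - Real.exp (-x ^ 2 / A)) with hgdef
  have hphi : ∀ x : ℝ, x ≠ 0 → HasDerivAt (phiOn Q0 D Ds ti t) (g x) x := by
    intro x hx
    have h := phi_hasDerivAt c A B hA hB hx
    have hEq : c * (2 / x) * (Real.exp (-x ^ 2 / B) - Real.exp (-x ^ 2 / A)) = g x := by
      rw [hgdef]; rw [div_eq_mul_inv]
    rw [← hEq]
    have hfun : phiOn Q0 D Ds ti t = fun x => c * (E1 (x ^ 2 / A) - E1 (x ^ 2 / B)) := by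
      funext y
      simp only [phiOn, hAdef, hBdef, hcdef]
    rw [hfun]
    exact h
  have hg_ev : deriv (phiOn Q0 D Ds ti t) =ᶠ[nhds d] g := by
    filter_upwards [compl_singleton_mem_nhds hd] with x hx
    exact (hphi x hx).deriv
  have hx2 : (0:ℝ) < d ^ 2 := by positivity
  -- second derivative of g
  have h1 : HasDerivAt (fun x : ℝ => c * (2 * x⁻¹)) (c * (2 * -(d ^ 2)⁻¹)) d := by
    simpa [mul_assoc] using ((hasDerivAt_inv hd).const_mul 2).const_mul c
  have hnA : HasDerivAt (fun x : ℝ => -x ^ 2 / A) (-(2 * d) / A) d := by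
    simpa using ((hasDerivAt_pow 2 d).neg.div_const A)
  have hnB : HasDerivAt (fun x : ℝ => -x ^ 2 / B) (-(2 * d) / B) d := by
    simpa using ((hasDerivAt_pow 2 d).neg.div_const B)
  have h2 := (hnB.exp.sub hnA.exp)
  have htot := h1.mul h2
  have hderiv_g : deriv g d
      = c * (2 * -(d ^ 2)⁻¹) * (Real.exp (-d ^ 2 / B) - Real.exp (-d ^ 2 / A))
        + c * (2 * d⁻¹) * (Real.exp (-d ^ 2 / B) * (-(2 * d) / B)
          - Real.exp (-d ^ 2 / A) * (-(2 * d) / A)) := htot.deriv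
  have key : deriv (deriv (phiOn Q0 D Ds ti t)) d
      = (Q0 / (2 * Real.pi * D * d ^ 2)) *
          ((1 + 2 * d ^ 2 / A) * Real.exp (-d ^ 2 / A)
            - (1 + 2 * d ^ 2 / B) * Real.exp (-d ^ 2 / B)) := by
    rw [hg_ev.deriv_eq, hderiv_g, hcdef]
    field_simp
    ring
  refine ⟨key, ?_, ?_⟩
  · intro hlt
    rw [key]
    have hmem : d ^ 2 / B ∈ Iic (1/2 : ℝ) := le_of_lt hlt
    have hyAB : d ^ 2 / A < d ^ 2 / B := div_lt_div_of_pos_left hx2 hB hBA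
    have hmemA : d ^ 2 / A ∈ Iic (1/2 : ℝ) := le_of_lt (hyAB.trans hlt)
    have hF : Fa (d ^ 2 / A) < Fa (d ^ 2 / B) := Fa_strictMonoOn hmemA hmem hyAB
    have hrw : (1 + 2 * d ^ 2 / A) * Real.exp (-d ^ 2 / A)
        - (1 + 2 * d ^ 2 / B) * Real.exp (-d ^ 2 / B)
        = Fa (d ^ 2 / A) - Fa (d ^ 2 / B) := by
      simp only [Fa]
      rw [show (-d ^ 2 / A : ℝ) = -(d ^ 2 / A) by ring,
        show (-d ^ 2 / B : ℝ) = -(d ^ 2 / B) by ring]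
      ring
    rw [hrw]
    have hK : 0 < Q0 / (2 * Real.pi * D * d ^ 2) := by positivity
    exact mul_neg_of_pos_of_neg hK (by linarith)
  · intro hlt
    rw [key]
    have hmemA : d ^ 2 / A ∈ Ici (1/2 : ℝ) := le_of_lt hlt
    have hyAB : d ^ 2 / A < d ^ 2 / B := div_lt_div_of_pos_left hx2 hB hBA
    have hmemB : d ^ 2 / B ∈ Ici (1/2 : ℝ) := le_of_lt (hlt.trans hyAB)
    have hF : Fa (d ^ 2 / B) < Fa (d ^ 2 / A) := Fa_strictAntiOn hmemA hmemB hyAB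
    have hrw : (1 + 2 * d ^ 2 / A) * Real.exp (-d ^ 2 / A)
        - (1 + 2 * d ^ 2 / B) * Real.exp (-d ^ 2 / B)
        = Fa (d ^ 2 / A) - Fa (d ^ 2 / B) := by
      simp only [Fa]
      rw [show (-d ^ 2 / A : ℝ) = -(d ^ 2 / A) by ring,
        show (-d ^ 2 / B : ℝ) = -(d ^ 2 / B) by ring]
      ring
    rw [hrw]
    have hK : 0 < Q0 / (2 * Real.pi * D * d ^ 2) := by positivity
    exact mul_pos hK (by linarith)
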